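/- Let g : ℝ^d → ℝ^m with m ≥ 2 and assume g_k(x) > 0 for every x ∈ ℝ^d and every k = 1,…,m. Then the set of weakly Pareto optimal points of g equals the union over w ∈ Ω of the sets of global minimizers of x ↦ G_∞(x,w). -/
import Mathlib


/-- For `g` with strictly positive components, the set of weakly Pareto
optimal points of `g` equals the union, over weight vectors `w` in the probability
simplex, of the sets of global minimizers of the weighted Chebyshev scalarization
`G_∞(·,w) = max_k w k * |g_k(·)|`. -/
theorem weakly_pareto_eq_union_chebyshev_minimizers
    (d m : ℕ) (hm : 2 ≤ m) (g : (Fin d → ℝ) → Fin m → ℝ)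
    (hg : ∀ x k, 0 < g x k) :
    {xbar : Fin d → ℝ | ¬ ∃ x : Fin d → ℝ, ∀ k, g x k < g xbar k} =
      ⋃ w ∈ {w : Fin m → ℝ | (∀ k, 0 ≤ w k) ∧ ∑ k, w k = 1},
        {xbar : Fin d → ℝ | ∀ x : Fin d → ℝ,
          (⨆ k : Fin m, w k * |g xbar k|) ≤ ⨆ k : Fin m, w k * |g x k|} := by
  haveI : NeZero m := ⟨by omega⟩
  have bdd : ∀ f : Fin m → ℝ, BddAbove (Set.range f) :=
    fun f => (Set.finite_range f).bddAbove
  ext xbar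
  simp only [Set.mem_setOf_eq, Set.mem_iUnion, exists_prop]
  constructor
  · intro h
    set S : ℝ := ∑ j, (g xbar j)⁻¹ with hS
    have hSpos : 0 < S := Finset.sum_pos (fun j _ => inv_pos.2 (hg xbar j)) ⟨0, Finset.mem_univ 0⟩
    refine ⟨fun k => (g xbar k)⁻¹ / S, ⟨fun k => div_nonneg (inv_pos.2 (hg xbar k)).le hSpos.le, ?_⟩, ?_⟩
    · rw [← Finset.sum_div, ← hS, div_self hSpos.ne']
    · intro x
      have hval : ∀ k, (g xbar k)⁻¹ / S * |g xbar k| = 1 / S := by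
        intro k
        rw [abs_of_pos (hg xbar k), div_mul_eq_mul_div,
          inv_mul_cancel₀ (hg xbar k).ne']
      have hsup : (⨆ k : Fin m, (g xbar k)⁻¹ / S * |g xbar k|) = 1 / S := by
        simp only [hval]; exact ciSup_const
      rw [hsup]
      by_contra hlt
      push_neg at hlt
      apply h
      refine ⟨x, fun k => ?_⟩
      have hk : (g xbar k)⁻¹ / S * |g x k| < 1 / S :=
        lt_of_le_of_lt (le_ciSup (bdd (fun k => (g xbar k)⁻¹ / S * |g x k|)) k) hlt
      rw [abs_of_pos (hg x k), div_mul_eq_mul_div] at hk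
      have h1 : (g xbar k)⁻¹ * g x k < 1 := (div_lt_div_iff_of_pos_right hSpos).1 hk
      calc g x k = g xbar k * ((g xbar k)⁻¹ * g x k) := by
            rw [← mul_assoc, mul_inv_cancel₀ (hg xbar k).ne', one_mul]
        _ < g xbar k * 1 := mul_lt_mul_of_pos_left h1 (hg xbar k)
        _ = g xbar k := mul_one _
  · rintro ⟨w, ⟨hw0, hw1⟩, hmin⟩ ⟨x, hx⟩
    obtain ⟨k1, hk1⟩ : ∃ k, 0 < w k := by
      by_contra hc
      push_neg at hc
      have : ∑ k, w k = 0 := Finset.sum_eq_zero fun k _ => le_antisymm (hc k) (hw0 k)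
      rw [hw1] at this; norm_num at this
    have habs : ∀ y k, w k * |g y k| = w k * g y k := fun y k => by
      rw [abs_of_pos (hg y k)]
    have hle : ∀ k, w k * g x k ≤ w k * g xbar k :=
      fun k => mul_le_mul_of_nonneg_left (hx k).le (hw0 k)
    have hAB : (⨆ k : Fin m, w k * |g xbar k|) ≤ ⨆ k : Fin m, w k * |g x k| := hmin x
    have hBA : (⨆ k : Fin m, w k * |g x k|) ≤ ⨆ k : Fin m, w k * |g xbar k| := by
      apply ciSup_le
      intro k
      rw [habs x k]
      exact (hle k).trans ((habs xbar k).symm ▸ le_ciSup (bdd (fun k => w k * |g xbar k|)) k)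
    have hEq : (⨆ k : Fin m, w k * |g x k|) = ⨆ k : Fin m, w k * |g xbar k| :=
      le_antisymm hBA hAB
    have hApos : 0 < ⨆ k : Fin m, w k * |g xbar k| := by
      calc (0:ℝ) < w k1 * |g xbar k1| := by
            rw [habs]; exact mul_pos hk1 (hg xbar k1)
        _ ≤ _ := le_ciSup (bdd (fun k => w k * |g xbar k|)) k1
    obtain ⟨k0, hk0⟩ := Finite.exists_max (fun k : Fin m => w k * |g x k|)
    have hBval : (⨆ k : Fin m, w k * |g x k|) = w k0 * |g x k0| :=
      le_antisymm (ciSup_le hk0) (le_ciSup (bdd (fun k => w k * |g x k|)) k0)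
    rcases eq_or_lt_of_le (hw0 k0) with h0 | h0
    · rw [hBval, ← h0, zero_mul] at hEq
      exact absurd hEq.symm (ne_of_gt hApos)
    · have : w k0 * |g x k0| < w k0 * |g xbar k0| := by
        rw [abs_of_pos (hg x k0), abs_of_pos (hg xbar k0)]
        exact mul_lt_mul_of_pos_left (hx k0) h0
      have h2 : (⨆ k : Fin m, w k * |g x k|) < ⨆ k : Fin m, w k * |g xbar k| :=
        hBval ▸ this.trans_le (le_ciSup (bdd (fun k => w k * |g xbar k|)) k0)
      exact absurd hEq h2.ne
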